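/- Let Q be a positive semidefinite operator on the symmetric subspace H₊ of H⊗H (i.e., P₊QP₊ = Q where P₊ is the projector onto the symmetric subspace), and let Q̃ = tr₁(Q) + tr₂(Q) be its symmetrized marginal. Then Q̃² ≤ tr(Q̃)·Q̃ as operators, with equality (in the sense that Q̃ is proportional to a rank-one projector) if and only if Q is proportional to the second tensor power of a pure state. -/

import Mathlib

open Matrix Kronecker ComplexOrder BigOperators

/-- The swap operator `V` on `ℂ^d ⊗ ℂ^d`, `V(x ⊗ y) = y ⊗ x`. -/
noncomputable def swapOp (d : ℕ) : Matrix (Fin d × Fin d) (Fin d × Fin d) ℂ :=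
  fun p q => if p.1 = q.2 ∧ p.2 = q.1 then 1 else 0

/-- Projector onto the symmetric subspace of `ℂ^d ⊗ ℂ^d`. -/
noncomputable def Pplus (d : ℕ) : Matrix (Fin d × Fin d) (Fin d × Fin d) ℂ :=
  (2 : ℂ)⁻¹ • (1 + swapOp d)

/-- Projector onto the antisymmetric subspace of `ℂ^d ⊗ ℂ^d`. -/
noncomputable def Pminus (d : ℕ) : Matrix (Fin d × Fin d) (Fin d × Fin d) ℂ :=
  (2 : ℂ)⁻¹ • (1 - swapOp d)

/-- Partial trace over the first tensor factor. -/
noncomputable def ptr1 {d : ℕ} (Q : Matrix (Fin d × Fin d) (Fin d × Fin d) ℂ) :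
    Matrix (Fin d) (Fin d) ℂ :=
  fun j k => ∑ i, Q (i, j) (i, k)

/-- Partial trace over the second tensor factor. -/
noncomputable def ptr2 {d : ℕ} (Q : Matrix (Fin d × Fin d) (Fin d × Fin d) ℂ) :
    Matrix (Fin d) (Fin d) ℂ :=
  fun i j => ∑ k, Q (i, k) (j, k)

section AuxGeneral

variable {n : Type*} [Fintype n] [DecidableEq n]

lemma trace_smul_sub_sq_psd (M : Matrix n n ℂ) (hM : M.PosSemidef) :
    (M.trace • M - M * M).PosSemidef := by
  have h := hM.1
  set U : Matrix n n ℂ := (h.eigenvectorUnitary : Matrix n n ℂ) with hUdef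
  have hU1 : star U * U = 1 := Unitary.coe_star_mul_self _
  set f : n → ℂ := RCLike.ofReal ∘ h.eigenvalues with hfdef
  have hspec : M = U * diagonal f * star U := h.spectral_theorem
  have htr : M.trace = ((∑ i, h.eigenvalues i : ℝ) : ℂ) := by
    conv_lhs => rw [hspec]
    rw [Matrix.trace_mul_cycle, hU1, one_mul, Matrix.trace_diagonal]
    push_cast; rfl
  have key : ∀ A B : Matrix n n ℂ, (U*A*star U) * (U*B*star U) = U*(A*B)*star U := by
    intro A B
    calc (U*A*star U) * (U*B*star U) = U*A*(star U*U)*(B*star U) := by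
          simp only [Matrix.mul_assoc]
      _ = U*(A*B)*star U := by rw [hU1, Matrix.mul_one]; simp only [Matrix.mul_assoc]
  have hMM : M * M = U * diagonal (fun i => f i * f i) * star U := by
    conv_lhs => rw [hspec]
    rw [key, diagonal_mul_diagonal]
  have hsm : M.trace • M = U * diagonal (fun i => M.trace * f i) * star U := by
    nth_rw 2 [hspec]
    rw [show diagonal (fun i => M.trace * f i) = M.trace • diagonal f from by
      rw [← diagonal_smul]; rfl]
    rw [mul_smul_comm, smul_mul_assoc]
  have hdiff : M.trace • M - M * M
      = U * diagonal (fun i => M.trace * f i - f i * f i) * star U := by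
    rw [hMM, hsm, ← Matrix.sub_mul, ← Matrix.mul_sub, diagonal_sub]
  rw [hdiff, Matrix.star_eq_conjTranspose]
  refine PosSemidef.mul_mul_conjTranspose_same ?_ U
  refine PosSemidef.diagonal ?_
  intro i
  rw [htr, hfdef]
  have h1 : (0:ℝ) ≤ h.eigenvalues i := hM.eigenvalues_nonneg i
  have h2 : h.eigenvalues i ≤ ∑ j, h.eigenvalues j :=
    Finset.single_le_sum (fun j _ => hM.eigenvalues_nonneg j) (Finset.mem_univ i)
  have : (0:ℝ) ≤ (∑ j, h.eigenvalues j) * h.eigenvalues i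
      - h.eigenvalues i * h.eigenvalues i := by nlinarith
  calc (0:ℂ) ≤ (((∑ j, h.eigenvalues j) * h.eigenvalues i
      - h.eigenvalues i * h.eigenvalues i : ℝ) : ℂ) := by
        rw [Complex.zero_le_real]; exact this
    _ = _ := by simp only [hfdef, Function.comp_apply]; push_cast; norm_num [RCLike.ofReal]; try ring

lemma rank_one_of_eq (M : Matrix n n ℂ) (hM : M.PosSemidef) (ht : M.trace ≠ 0)
    (heq : M * M = M.trace • M) :
    ∃ v : n → ℂ, star v ⬝ᵥ v = 1 ∧ M = M.trace • vecMulVec v (star v) := by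
  have h := hM.1
  set U : Matrix n n ℂ := (h.eigenvectorUnitary : Matrix n n ℂ) with hUdef
  have hU1 : star U * U = 1 := Unitary.coe_star_mul_self _
  have hU2 : U * star U = 1 := Unitary.coe_mul_star_self _
  set f : n → ℂ := RCLike.ofReal ∘ h.eigenvalues with hfdef
  have hfeq : ∀ i, f i = ((h.eigenvalues i : ℝ) : ℂ) := fun i => rfl
  have hspec : M = U * diagonal f * star U := h.spectral_theorem
  have hdiag : star U * M * U = diagonal f := by
    rw [hspec]; simp only [← Matrix.mul_assoc, hU1, Matrix.one_mul]
    simp only [Matrix.mul_assoc, hU1, Matrix.mul_one]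
  have htr : M.trace = ((∑ i, h.eigenvalues i : ℝ) : ℂ) := by
    conv_lhs => rw [hspec]
    rw [Matrix.trace_mul_cycle, hU1, one_mul, Matrix.trace_diagonal]
    push_cast; rfl
  set T : ℝ := ∑ i, h.eigenvalues i with hTdef
  have hDD : diagonal f * diagonal f = M.trace • diagonal f := by
    have e1 : star U * (M * M) * U = (star U * M * U) * (star U * M * U) := by
      calc star U * (M * M) * U = (star U * M) * (U * star U) * (M * U) := by
            rw [hU2, Matrix.mul_one]; simp only [Matrix.mul_assoc]
        _ = _ := by simp only [Matrix.mul_assoc]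
    have e2 : star U * (M * M) * U = star U * (M.trace • M) * U := by rw [heq]
    rw [e1, hdiag, mul_smul_comm, smul_mul_assoc, hdiag] at e2
    exact e2
  have hev : ∀ i, h.eigenvalues i * h.eigenvalues i = T * h.eigenvalues i := by
    intro i
    have := congrFun (congrFun hDD i) i
    rw [diagonal_mul_diagonal] at this
    simp only [diagonal_apply_eq, Matrix.smul_apply, smul_eq_mul, htr, hfeq] at this
    exact_mod_cast this
  have hTne : T ≠ 0 := by
    intro h0; rw [htr, h0] at ht; simp at ht
  have hTpos : 0 < T := by
    rcases (Finset.sum_nonneg fun i _ => hM.eigenvalues_nonneg i).lt_or_eq with h' | h'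
    · exact h'
    · exact absurd h'.symm hTne
  set S : Finset n := Finset.univ.filter (fun i => h.eigenvalues i ≠ 0) with hSdef
  have hSval : ∀ i ∈ S, h.eigenvalues i = T := by
    intro i hi
    have hne : h.eigenvalues i ≠ 0 := (Finset.mem_filter.mp hi).2
    have := hev i
    rw [mul_eq_mul_right_iff] at this
    rcases this with h' | h'
    · exact h'
    · exact absurd h' hne
  have hTS : T = (S.card : ℝ) * T := by
    conv_lhs => rw [hTdef, ← Finset.sum_filter_ne_zero]
    rw [Finset.sum_congr rfl hSval, Finset.sum_const, nsmul_eq_mul]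
  have hcard : S.card = 1 := by
    have h1 : (1:ℝ) * T = (S.card : ℝ) * T := by rw [one_mul]; exact hTS
    have : (1:ℝ) = (S.card : ℝ) := mul_right_cancel₀ hTne h1
    exact_mod_cast this.symm
  obtain ⟨i₀, hi₀⟩ := Finset.card_eq_one.mp hcard
  have hlam₀ : h.eigenvalues i₀ = T := hSval i₀ (hi₀ ▸ Finset.mem_singleton_self i₀)
  have hlam : ∀ j, j ≠ i₀ → h.eigenvalues j = 0 := by
    intro j hj
    by_contra hne
    have : j ∈ S := Finset.mem_filter.mpr ⟨Finset.mem_univ j, hne⟩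
    rw [hi₀, Finset.mem_singleton] at this
    exact hj this
  refine ⟨fun p => U p i₀, ?_, ?_⟩
  · have := congrFun (congrFun hU1 i₀) i₀
    simpa [Matrix.mul_apply, dotProduct, one_apply] using this
  · rw [htr]
    ext p q
    conv_lhs => rw [hspec]
    have : (U * diagonal f * star U) p q = ∑ j, U p j * f j * star (U q j) := by
      rw [Matrix.mul_apply]
      simp only [Matrix.mul_diagonal, Matrix.star_apply]
    have hsum : ∑ j, U p j * f j * star (U q j) = U p i₀ * f i₀ * star (U q i₀) :=
      Finset.sum_eq_single i₀ (fun j _ hj => by simp [hfeq, hlam j hj]) (by simp)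
    rw [this, hsum]
    simp only [Matrix.smul_apply, vecMulVec_apply, smul_eq_mul, Pi.star_apply, hfeq, hlam₀]
    ring

lemma psd_ne_zero_trace {A : Matrix n n ℂ} (hA : A.PosSemidef) (h0 : A ≠ 0) :
    A.trace ≠ 0 := by
  intro htr
  apply h0
  have hdiag : ∀ p, A p p = star (Pi.single p 1) ⬝ᵥ A *ᵥ Pi.single p 1 := by
    intro p
    simp [dotProduct, mulVec, Pi.single_apply, apply_ite, ite_mul, mul_ite]
  have hnn : ∀ p ∈ Finset.univ, (0:ℂ) ≤ A.diag p := by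
    intro p _
    rw [Matrix.diag_apply, hdiag p]
    exact hA.dotProduct_mulVec_nonneg _
  have hz : ∀ p ∈ Finset.univ, A.diag p = 0 :=
    (Finset.sum_eq_zero_iff_of_nonneg hnn).mp htr
  ext p q
  have h1 : star (Pi.single q 1) ⬝ᵥ A *ᵥ Pi.single q 1 = 0 := by
    rw [← hdiag q]; exact hz q (Finset.mem_univ q)
  have h2 := (hA.dotProduct_mulVec_zero_iff (Pi.single q 1)).mp h1
  have := congrFun h2 p
  simpa [mulVec, dotProduct, Pi.single_apply, mul_ite] using this

end AuxGeneral

def tens {d : ℕ} (x y : Fin d → ℂ) : Fin d × Fin d → ℂ := fun p => x p.1 * y p.2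

section AuxExplicit

variable {d : ℕ} (Q : Matrix (Fin d × Fin d) (Fin d × Fin d) ℂ)

lemma quad_tens1 (x : Fin d → ℂ) (i : Fin d) :
    star (tens (Pi.single i 1) x) ⬝ᵥ Q *ᵥ tens (Pi.single i 1) x
      = ∑ j, ∑ k, star (x j) * Q (i, j) (i, k) * x k := by
  have hv : ∀ p : Fin d × Fin d, tens (Pi.single i 1) x p
      = if p.1 = i then x p.2 else 0 := by
    intro p; simp [tens, Pi.single_apply, ite_mul]
  have hmv : ∀ j : Fin d, (Q *ᵥ tens (Pi.single i 1) x) (i, j)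
      = ∑ k, Q (i, j) (i, k) * x k := by
    intro j
    rw [mulVec, dotProduct, Fintype.sum_prod_type]
    simp only [hv, mul_ite, mul_zero]
    simp [Finset.sum_ite_eq]
  rw [dotProduct, Fintype.sum_prod_type]
  simp only [Pi.star_apply, hv, apply_ite, star_zero, ite_mul, zero_mul]
  rw [Finset.sum_comm]
  simp only [Finset.sum_ite_eq', Finset.mem_univ, if_true]
  refine Finset.sum_congr rfl fun j _ => ?_
  rw [hmv, Finset.mul_sum]
  refine Finset.sum_congr rfl fun k _ => ?_
  ring

lemma quad_tens2 (x : Fin d → ℂ) (k : Fin d) :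
    star (tens x (Pi.single k 1)) ⬝ᵥ Q *ᵥ tens x (Pi.single k 1)
      = ∑ i, ∑ j, star (x i) * Q (i, k) (j, k) * x j := by
  have hv : ∀ p : Fin d × Fin d, tens x (Pi.single k 1) p
      = if p.2 = k then x p.1 else 0 := by
    intro p; simp [tens, Pi.single_apply, mul_ite, mul_one, mul_zero]
  have hmv : ∀ i : Fin d, (Q *ᵥ tens x (Pi.single k 1)) (i, k)
      = ∑ j, Q (i, k) (j, k) * x j := by
    intro i
    rw [mulVec, dotProduct, Fintype.sum_prod_type]
    simp only [hv, mul_ite, mul_zero]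
    simp [Finset.sum_ite_eq]
  rw [dotProduct, Fintype.sum_prod_type]
  simp only [Pi.star_apply, hv, apply_ite, star_zero, ite_mul, zero_mul]
  simp only [Finset.sum_ite_eq, Finset.sum_ite_eq', Finset.mem_univ, if_true]
  refine Finset.sum_congr rfl fun i _ => ?_
  rw [hmv, Finset.mul_sum]
  refine Finset.sum_congr rfl fun j _ => ?_
  ring

lemma ptr1_quadform (x : Fin d → ℂ) :
    star x ⬝ᵥ (ptr1 Q) *ᵥ x
      = ∑ i, star (tens (Pi.single i 1) x) ⬝ᵥ Q *ᵥ tens (Pi.single i 1) x := by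
  simp only [quad_tens1]
  have L : star x ⬝ᵥ (ptr1 Q) *ᵥ x
      = ∑ j, ∑ k, ∑ i, star (x j) * Q (i, j) (i, k) * x k := by
    simp only [dotProduct, mulVec, ptr1, Pi.star_apply, Finset.mul_sum, Finset.sum_mul]
    exact Finset.sum_congr rfl fun j _ => Finset.sum_congr rfl fun k _ =>
      Finset.sum_congr rfl fun i _ => by ring
  rw [L]
  rw [show (∑ j, ∑ k, ∑ i, star (x j) * Q (i, j) (i, k) * x k)
      = ∑ j, ∑ i, ∑ k, star (x j) * Q (i, j) (i, k) * x k from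
    Finset.sum_congr rfl fun j _ => Finset.sum_comm]
  exact Finset.sum_comm

lemma ptr2_quadform (x : Fin d → ℂ) :
    star x ⬝ᵥ (ptr2 Q) *ᵥ x
      = ∑ k, star (tens x (Pi.single k 1)) ⬝ᵥ Q *ᵥ tens x (Pi.single k 1) := by
  simp only [quad_tens2]
  have L : star x ⬝ᵥ (ptr2 Q) *ᵥ x
      = ∑ i, ∑ j, ∑ k, star (x i) * Q (i, k) (j, k) * x j := by
    simp only [dotProduct, mulVec, ptr2, Pi.star_apply, Finset.mul_sum, Finset.sum_mul]
    exact Finset.sum_congr rfl fun i _ => Finset.sum_congr rfl fun j _ =>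
      Finset.sum_congr rfl fun k _ => by ring
  rw [L]
  rw [show (∑ i, ∑ j, ∑ k, star (x i) * Q (i, k) (j, k) * x j)
      = ∑ i, ∑ k, ∑ j, star (x i) * Q (i, k) (j, k) * x j from
    Finset.sum_congr rfl fun i _ => Finset.sum_comm]
  exact Finset.sum_comm

end AuxExplicit

section AuxImplicit

variable {d : ℕ} {Q : Matrix (Fin d × Fin d) (Fin d × Fin d) ℂ}

lemma tens_first_linear (w x : Fin d → ℂ) :
    tens w x = ∑ i, w i • tens (Pi.single i 1) x := by
  funext p
  simp [tens, Pi.single_apply, ite_mul, mul_ite, Finset.sum_ite_eq', smul_eq_mul]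

lemma tens_second_linear (x y : Fin d → ℂ) :
    tens x y = ∑ k, y k • tens x (Pi.single k 1) := by
  funext p
  simp only [Finset.sum_apply, Pi.smul_apply, tens, Pi.single_apply, ite_mul, mul_ite,
    mul_zero, zero_mul, mul_one, smul_eq_mul]
  rw [Finset.sum_congr rfl (fun k (_ : k ∈ Finset.univ) => show
    (if p.2 = k then y k * x p.1 else 0) = (if p.2 = k then x p.1 * y k else 0) from by
      split <;> ring)]
  simp [Finset.sum_ite_eq']

lemma structure_lemma (hQ : Q.PosSemidef) (v : Fin d → ℂ) (hv : star v ⬝ᵥ v = 1)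
    (hz : ∀ x : Fin d → ℂ, star v ⬝ᵥ x = 0 → (ptr1 Q + ptr2 Q) *ᵥ x = 0) :
    ∃ c : ℝ, 0 ≤ c ∧
      Q = (c:ℂ) • (vecMulVec v (star v) ⊗ₖ vecMulVec v (star v)) := by
  -- Step 1: quadratic forms vanish on v-perp
  have hzero : ∀ x : Fin d → ℂ, star v ⬝ᵥ x = 0 →
      star x ⬝ᵥ (ptr1 Q) *ᵥ x = 0 ∧ star x ⬝ᵥ (ptr2 Q) *ᵥ x = 0 := by
    intro x hx
    have hsum : star x ⬝ᵥ (ptr1 Q) *ᵥ x + star x ⬝ᵥ (ptr2 Q) *ᵥ x = 0 := by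
      rw [← dotProduct_add, ← Matrix.add_mulVec, hz x hx, dotProduct_zero]
    have h1 : (0:ℂ) ≤ star x ⬝ᵥ (ptr1 Q) *ᵥ x := by
      rw [ptr1_quadform]; exact Finset.sum_nonneg fun i _ => hQ.dotProduct_mulVec_nonneg _
    have h2 : (0:ℂ) ≤ star x ⬝ᵥ (ptr2 Q) *ᵥ x := by
      rw [ptr2_quadform]; exact Finset.sum_nonneg fun k _ => hQ.dotProduct_mulVec_nonneg _
    constructor
    · refine le_antisymm ?_ h1
      calc star x ⬝ᵥ (ptr1 Q) *ᵥ x = -(star x ⬝ᵥ (ptr2 Q) *ᵥ x) := by linear_combination hsum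
        _ ≤ 0 := by simpa using h2
    · refine le_antisymm ?_ h2
      calc star x ⬝ᵥ (ptr2 Q) *ᵥ x = -(star x ⬝ᵥ (ptr1 Q) *ᵥ x) := by linear_combination hsum
        _ ≤ 0 := by simpa using h1
  -- Step 2: Q annihilates basic tensors with a perp factor
  have hA : ∀ x : Fin d → ℂ, star v ⬝ᵥ x = 0 → ∀ i, Q *ᵥ tens (Pi.single i 1) x = 0 := by
    intro x hx i
    have h0 := (hzero x hx).1
    rw [ptr1_quadform] at h0
    have hall := (Finset.sum_eq_zero_iff_of_nonneg (fun i _ => hQ.dotProduct_mulVec_nonneg _)).mp h0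
    exact (hQ.dotProduct_mulVec_zero_iff _).mp (hall i (Finset.mem_univ i))
  have hB : ∀ x : Fin d → ℂ, star v ⬝ᵥ x = 0 → ∀ k, Q *ᵥ tens x (Pi.single k 1) = 0 := by
    intro x hx k
    have h0 := (hzero x hx).2
    rw [ptr2_quadform] at h0
    have hall := (Finset.sum_eq_zero_iff_of_nonneg (fun k _ => hQ.dotProduct_mulVec_nonneg _)).mp h0
    exact (hQ.dotProduct_mulVec_zero_iff _).mp (hall k (Finset.mem_univ k))
  -- Step 3: extend by linearity
  have hA' : ∀ (w x : Fin d → ℂ), star v ⬝ᵥ x = 0 → Q *ᵥ tens w x = 0 := by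
    intro w x hx
    rw [show Q *ᵥ tens w x = Q.mulVecLin (tens w x) from rfl, tens_first_linear, map_sum]
    refine Finset.sum_eq_zero fun i _ => ?_
    rw [LinearMap.map_smul]
    simp [Matrix.mulVecLin_apply, hA x hx i]
  have hB' : ∀ (x y : Fin d → ℂ), star v ⬝ᵥ x = 0 → Q *ᵥ tens x y = 0 := by
    intro x y hx
    rw [show Q *ᵥ tens x y = Q.mulVecLin (tens x y) from rfl, tens_second_linear, map_sum]
    refine Finset.sum_eq_zero fun k _ => ?_
    rw [LinearMap.map_smul]
    simp [Matrix.mulVecLin_apply, hB x hx k]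
  -- Step 4: column structure
  set w : Fin d × Fin d → ℂ := Q *ᵥ tens v v with hwdef
  have hperp : ∀ a : Fin d, star v ⬝ᵥ (Pi.single a 1 - (star (v a)) • v)
      = (star (v a)) * (1 - star v ⬝ᵥ v) := by
    intro a
    rw [dotProduct_sub, dotProduct_smul]
    simp [dotProduct, Pi.single_apply, mul_ite, Finset.sum_ite_eq', smul_eq_mul]
    ring
  have hxa : ∀ a : Fin d, star v ⬝ᵥ (Pi.single a 1 - (star (v a)) • v) = 0 := by
    intro a; rw [hperp, hv]; ring
  have htsub1 : ∀ (c : ℂ) (y : Fin d → ℂ) (a : Fin d),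
      tens (Pi.single a 1) y = tens (Pi.single a 1 - c • v) y + c • tens v y := by
    intro c y a; funext p; simp [tens, sub_mul, smul_eq_mul]; ring
  have htsub2 : ∀ (c : ℂ) (y : Fin d → ℂ) (b : Fin d),
      tens y (Pi.single b 1) = tens y (Pi.single b 1 - c • v) + c • tens y v := by
    intro c y b; funext p; simp [tens, mul_sub, smul_eq_mul]; ring
  have hstep1 : ∀ (y : Fin d → ℂ) (a : Fin d),
      Q *ᵥ tens (Pi.single a 1) y = star (v a) • (Q *ᵥ tens v y) := by
    intro y a
    rw [htsub1 (star (v a)) y a, Matrix.mulVec_add, Matrix.mulVec_smul,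
      hB' _ y (hxa a), zero_add]
  have hstep2 : ∀ b : Fin d,
      Q *ᵥ tens v (Pi.single b 1) = star (v b) • w := by
    intro b
    rw [htsub2 (star (v b)) v b, Matrix.mulVec_add, Matrix.mulVec_smul,
      hA' v _ (hxa b), zero_add, hwdef]
  have hcol : ∀ a b : Fin d, Q *ᵥ tens (Pi.single a 1) (Pi.single b 1)
      = (star (v a) * star (v b)) • w := by
    intro a b
    rw [hstep1, hstep2, smul_smul]
  have hbasic : ∀ (p : Fin d × Fin d) (a b : Fin d),
      (Q *ᵥ tens (Pi.single a 1) (Pi.single b 1)) p = Q p (a, b) := by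
    intro p a b
    rw [mulVec, dotProduct, Fintype.sum_prod_type]
    simp only [tens, Pi.single_apply, ite_mul, mul_ite, mul_zero, zero_mul, mul_one,
      one_mul, ite_and]
    simp [Finset.sum_ite_eq']
  have hentry : ∀ (p : Fin d × Fin d) (a b : Fin d),
      Q p (a, b) = star (v a) * star (v b) * w p := by
    intro p a b
    rw [← hbasic p a b, hcol a b]
    simp [smul_eq_mul]
  have hherm : ∀ p q : Fin d × Fin d, Q p q = star (Q q p) := by
    intro p q
    exact (congrFun (congrFun hQ.1 p) q).symm
  set α : ℂ := star (tens v v) ⬝ᵥ w with hαdef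
  have hα : (0:ℂ) ≤ α := hQ.dotProduct_mulVec_nonneg _
  obtain ⟨hαre, hαim⟩ := Complex.nonneg_iff.mp hα
  have hαreal : star α = α := by
    rw [Complex.star_def]
    exact Complex.conj_eq_iff_im.mpr hαim.symm
  have hw : ∀ a b : Fin d, w (a, b) = v a * v b * star α := by
    intro a b
    have e1 : w (a, b) = ∑ q, Q (a, b) q * tens v v q := by
      rw [hwdef]; rfl
    rw [e1]
    have e2 : ∀ q : Fin d × Fin d, Q (a, b) q * tens v v q
        = v a * v b * (star (w q) * (v q.1 * v q.2)) := by
      intro q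
      rw [hherm (a,b) q, hentry q a b]
      simp only [tens, star_mul', star_star]
      ring
    rw [Finset.sum_congr rfl fun q _ => e2 q, ← Finset.mul_sum]
    congr 1
    have e3 : star α = ∑ q : Fin d × Fin d, star (w q) * (v q.1 * v q.2) := by
      rw [hαdef]
      simp only [dotProduct, star_sum, star_mul', star_star, Pi.star_apply, tens]
      exact Finset.sum_congr rfl fun q _ => by ring
    rw [e3]
  refine ⟨α.re, hαre, ?_⟩
  have hcα : (α.re : ℂ) = α := by
    apply Complex.ext
    · simp
    · simp [← hαim]
  ext p q
  rw [hentry p q.1 q.2]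
  have : w p = v p.1 * v p.2 * star α := by
    have := hw p.1 p.2
    simpa using this
  rw [this, hαreal]
  simp only [Matrix.smul_apply, kroneckerMap_apply, vecMulVec_apply, Pi.star_apply, smul_eq_mul]
  rw [hcα]
  ring

end AuxImplicit

section AuxMore

variable {d : ℕ}

lemma ptr1_isHermitian {Q : Matrix (Fin d × Fin d) (Fin d × Fin d) ℂ}
    (hQ : Q.IsHermitian) : (ptr1 Q).IsHermitian := by
  ext j k
  rw [conjTranspose_apply]
  simp only [ptr1, star_sum]
  exact Finset.sum_congr rfl fun i _ => congrFun (congrFun hQ (i, j)) (i, k)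

lemma ptr2_isHermitian {Q : Matrix (Fin d × Fin d) (Fin d × Fin d) ℂ}
    (hQ : Q.IsHermitian) : (ptr2 Q).IsHermitian := by
  ext j k
  rw [conjTranspose_apply]
  simp only [ptr2, star_sum]
  exact Finset.sum_congr rfl fun i _ => congrFun (congrFun hQ (j, i)) (k, i)

lemma tilde_trace (Q : Matrix (Fin d × Fin d) (Fin d × Fin d) ℂ) :
    (ptr1 Q + ptr2 Q).trace = 2 * Q.trace := by
  simp only [trace, diag, Matrix.add_apply, ptr1, ptr2, Finset.sum_add_distrib,
    Fintype.sum_prod_type, two_mul]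
  congr 1
  exact Finset.sum_comm

-- converse computation
lemma converse_calc (c : ℝ) (ψ : Fin d → ℂ)
    (Q : Matrix (Fin d × Fin d) (Fin d × Fin d) ℂ)
    (hc : Q = (c : ℂ) • (vecMulVec ψ (star ψ) ⊗ₖ vecMulVec ψ (star ψ))) :
    (ptr1 Q + ptr2 Q) * (ptr1 Q + ptr2 Q)
      = (ptr1 Q + ptr2 Q).trace • (ptr1 Q + ptr2 Q) := by
  set s : ℂ := star ψ ⬝ᵥ ψ with hsdef
  set P : Matrix (Fin d) (Fin d) ℂ := vecMulVec ψ (star ψ) with hPdef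
  have h1 : ptr1 Q = ((c:ℂ) * s) • P := by
    ext j k
    simp only [ptr1, hc, Matrix.smul_apply, kroneckerMap_apply, vecMulVec_apply, smul_eq_mul,
      hPdef, hsdef, dotProduct, Pi.star_apply, Finset.sum_mul, Finset.mul_sum]
    exact Finset.sum_congr rfl fun i _ => by ring
  have h2 : ptr2 Q = ((c:ℂ) * s) • P := by
    ext j k
    simp only [ptr2, hc, Matrix.smul_apply, kroneckerMap_apply, vecMulVec_apply, smul_eq_mul,
      hPdef, hsdef, dotProduct, Pi.star_apply, Finset.sum_mul, Finset.mul_sum]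
    exact Finset.sum_congr rfl fun i _ => by ring
  have hPP : P * P = s • P := by
    ext a b
    simp only [hPdef, Matrix.mul_apply, vecMulVec_apply, Matrix.smul_apply, smul_eq_mul, hsdef,
      dotProduct, Pi.star_apply, Finset.sum_mul, Finset.mul_sum]
    exact Finset.sum_congr rfl fun i _ => by ring
  have htrP : P.trace = s := by
    simp only [trace, diag, hPdef, vecMulVec_apply, hsdef, dotProduct, Pi.star_apply]
    exact Finset.sum_congr rfl fun i _ => by ring
  rw [h1, h2, ← add_smul]
  rw [smul_mul_smul_comm, hPP, trace_smul, htrP]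
  rw [smul_smul, smul_smul]
  congr 1
  simp only [smul_eq_mul]
  ring

end AuxMore

/-- If `Q ≥ 0` is supported on the symmetric subspace of `ℂ^d ⊗ ℂ^d` and
`Q̃ = tr₁ Q + tr₂ Q`, then `Q̃² ≤ tr(Q̃)·Q̃`, with equality iff `Q` is proportional to the
second tensor power of a pure state. -/
theorem stmt2 {d : ℕ} (Q : Matrix (Fin d × Fin d) (Fin d × Fin d) ℂ)
    (hQ : Q.PosSemidef) (hsupp : Pplus d * Q * Pplus d = Q) (hQ0 : Q ≠ 0) :
    ((ptr1 Q + ptr2 Q).trace • (ptr1 Q + ptr2 Q)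
        - (ptr1 Q + ptr2 Q) * (ptr1 Q + ptr2 Q)).PosSemidef ∧
    ((ptr1 Q + ptr2 Q) * (ptr1 Q + ptr2 Q)
        = (ptr1 Q + ptr2 Q).trace • (ptr1 Q + ptr2 Q)
      ↔ ∃ (c : ℝ) (ψ : Fin d → ℂ), 0 < c ∧ ψ ≠ 0 ∧
          Q = (c : ℂ) • (vecMulVec ψ (star ψ) ⊗ₖ vecMulVec ψ (star ψ))) := by
  have hM : (ptr1 Q + ptr2 Q).PosSemidef := by
    refine .of_dotProduct_mulVec_nonneg ((ptr1_isHermitian hQ.1).add (ptr2_isHermitian hQ.1)) fun x => ?_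
    rw [Matrix.add_mulVec, dotProduct_add]
    refine add_nonneg ?_ ?_
    · rw [ptr1_quadform]; exact Finset.sum_nonneg fun i _ => hQ.dotProduct_mulVec_nonneg _
    · rw [ptr2_quadform]; exact Finset.sum_nonneg fun k _ => hQ.dotProduct_mulVec_nonneg _
  refine ⟨trace_smul_sub_sq_psd _ hM, ?_, ?_⟩
  · intro heq
    have htrQ : Q.trace ≠ 0 := psd_ne_zero_trace hQ hQ0
    have htrM : (ptr1 Q + ptr2 Q).trace ≠ 0 := by
      rw [tilde_trace]; exact mul_ne_zero two_ne_zero htrQ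
    obtain ⟨v, hv, hMeq⟩ := rank_one_of_eq _ hM htrM heq
    have hz : ∀ x : Fin d → ℂ, star v ⬝ᵥ x = 0 → (ptr1 Q + ptr2 Q) *ᵥ x = 0 := by
      intro x hx
      have hx' : ∑ q, star (v q) * x q = 0 := by
        simpa [dotProduct] using hx
      rw [hMeq, Matrix.smul_mulVec]
      have h0 : (vecMulVec v (star v)) *ᵥ x = 0 := by
        funext p
        simp only [mulVec, dotProduct, vecMulVec_apply, Pi.star_apply, mul_assoc,
          ← Finset.mul_sum, hx', mul_zero, Pi.zero_apply]
      rw [h0, smul_zero]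
    obtain ⟨c, hcnn, hQeq⟩ := structure_lemma hQ v hv hz
    have hcne : c ≠ 0 := by
      rintro rfl
      apply hQ0
      simpa using hQeq
    refine ⟨c, v, lt_of_le_of_ne hcnn (Ne.symm hcne), ?_, hQeq⟩
    intro h0
    rw [h0] at hv
    simp at hv
  · rintro ⟨c, ψ, _, _, hQeq⟩
    exact converse_calc c ψ Q hQeq
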